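/- For n ≥ 1 let φ_exp = ⋀_{i=1}^n □^{i-1}(◇□^{n-i} p_i ∧ ◇□^{n-i} p̄_i). If M is a model and w a world with M,w ⊨ φ_exp, then for every truth assignment α : {1,…,n} → {true, false} there exists a world w' reachable from w by an R-path of length exactly n such that for every i ∈ {1,…,n}, M,w' ⊨ p_i if and only if α(i) = true. -/

import Mathlib

namespace PoorMansModal

/-- Modal formulas over propositional variables of type `α`: variables `p`,
negated variables `p̄`, general negation, conjunction, disjunction, box, diamond,
and the constants `true` and `false`. -/
inductive Fml (α : Type) : Type where
  | var : α → Fml α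
  | nvar : α → Fml α
  | neg : Fml α → Fml α
  | and : Fml α → Fml α → Fml α
  | or : Fml α → Fml α → Fml α
  | box : Fml α → Fml α
  | dia : Fml α → Fml α
  | tru : Fml α
  | fls : Fml α

/-- A Kripke model: a nonempty set of worlds, an accessibility relation, and a valuation. -/
structure Kripke (α : Type) where
  World : Type
  nonempty : Nonempty World
  R : World → World → Prop
  V : α → World → Prop

/-- Truth of a formula at a world of a model. -/
def Sat {α : Type} (M : Kripke α) : Fml α → M.World → Prop
  | .var p, w => M.V p w
  | .nvar p, w => ¬ M.V p w
  | .neg φ, w => ¬ Sat M φ w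
  | .and φ ψ, w => Sat M φ w ∧ Sat M ψ w
  | .or φ ψ, w => Sat M φ w ∨ Sat M ψ w
  | .box φ, w => ∀ v, M.R w v → Sat M φ v
  | .dia φ, w => ∃ v, M.R w v ∧ Sat M φ v
  | .tru, _ => True
  | .fls, _ => False

/-- Modal depth: depth of nesting of `□` and `◇`. -/
def mdep {α : Type} : Fml α → ℕ
  | .var _ => 0
  | .nvar _ => 0
  | .neg φ => mdep φ
  | .and φ ψ => max (mdep φ) (mdep ψ)
  | .or φ ψ => max (mdep φ) (mdep ψ)
  | .box φ => mdep φ + 1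
  | .dia φ => mdep φ + 1
  | .tru => 0
  | .fls => 0

/-- Conjunction of a list of formulas; the empty conjunction is the always-true formula. -/
def bigConj {α : Type} : List (Fml α) → Fml α
  | [] => .tru
  | [φ] => φ
  | φ :: rest => .and φ (bigConj rest)

/-- `□^k φ`. -/
def boxI {α : Type} : ℕ → Fml α → Fml α
  | 0, φ => φ
  | k + 1, φ => .box (boxI k φ)

/-- `◇^k φ`. -/
def diaI {α : Type} : ℕ → Fml α → Fml α
  | 0, φ => φ
  | k + 1, φ => .dia (diaI k φ)

/-- `(◇□)^k φ`. -/
def diaBoxI {α : Type} : ℕ → Fml α → Fml α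
  | 0, φ => φ
  | k + 1, φ => .dia (.box (diaBoxI k φ))

/-- The literal with variable `l.1` and sign `l.2` (`true` = positive). -/
def litF {α : Type} (l : α × Bool) : Fml α := if l.2 then .var l.1 else .nvar l.1

/-- The variable `p` occurs in the formula. -/
def occursV {α : Type} (p : α) : Fml α → Prop
  | .var q => p = q
  | .nvar q => p = q
  | .neg φ => occursV p φ
  | .and φ ψ => occursV p φ ∨ occursV p ψ
  | .or φ ψ => occursV p φ ∨ occursV p ψ
  | .box φ => occursV p φ
  | .dia φ => occursV p φ
  | .tru => False
  | .fls => False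

/-- Poor man's formulas: built from literals, `∧`, `□`, `◇` only. -/
def PoorF {α : Type} : Fml α → Prop
  | .var _ => True
  | .nvar _ => True
  | .and φ ψ => PoorF φ ∧ PoorF ψ
  | .box φ => PoorF φ
  | .dia φ => PoorF φ
  | _ => False

/-- Formulas of the language `L`: built from literals, `∧`, `∨`, `□`, `◇`. -/
def InL {α : Type} : Fml α → Prop
  | .var _ => True
  | .nvar _ => True
  | .and φ ψ => InL φ ∧ InL ψ
  | .or φ ψ => InL φ ∧ InL ψ
  | .box φ => InL φ
  | .dia φ => InL φ
  | _ => False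

/-- Every world has at most one successor. -/
def AtMostOne {W : Type} (R : W → W → Prop) : Prop :=
  ∀ w v v', R w v → R w v' → v = v'

/-- Every world has at least one successor. -/
def AtLeastOne {W : Type} (R : W → W → Prop) : Prop :=
  ∀ w, ∃ v, R w v

/-- Every world has at most two successors. -/
def AtMostTwo {W : Type} (R : W → W → Prop) : Prop :=
  ∀ w v₁ v₂ v₃, R w v₁ → R w v₂ → R w v₃ → v₁ = v₂ ∨ v₁ = v₃ ∨ v₂ = v₃

/-- `chainR R n w v`: there is an `R`-path of length exactly `n` from `w` to `v`. -/
def chainR {W : Type} (R : W → W → Prop) : ℕ → W → W → Prop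
  | 0, w, v => w = v
  | k + 1, w, v => ∃ u, R w u ∧ chainR R k u v

/-- `R` is the parent-child relation of a rooted tree with root `root`
in which every node has at most two children. -/
structure IsBinTree {W : Type} (R : W → W → Prop) (root : W) : Prop where
  reach : ∀ w, Relation.ReflTransGen R root w
  root_no_parent : ∀ w, ¬ R w root
  unique_parent : ∀ w v v', R v w → R v' w → v = v'
  acyclic : ∀ w, ¬ Relation.TransGen R w w
  at_most_two_children : ∀ w v₁ v₂ v₃, R w v₁ → R w v₂ → R w v₃ → v₁ = v₂ ∨ v₁ = v₃ ∨ v₂ = v₃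

/-- `φ_exp = ⋀_{i=1}^n □^{i-1}(◇□^{n-i} p_i ∧ ◇□^{n-i} p̄_i)`, with `p_i = var i`. -/
def phiExp (n : ℕ) : Fml ℕ :=
  bigConj ((List.range n).map (fun j =>
    boxI j (.and (.dia (boxI (n - 1 - j) (.var (j + 1))))
                 (.dia (boxI (n - 1 - j) (.nvar (j + 1)))))))

/-- Satisfiability with respect to the class of all frames. -/
def SatAll (φ : Fml ℕ) : Prop := ∃ (M : Kripke ℕ) (w : M.World), Sat M φ w

/-- Satisfiability with respect to `F≤1`. -/
def SatLe1 (φ : Fml ℕ) : Prop := ∃ M : Kripke ℕ, AtMostOne M.R ∧ ∃ w, Sat M φ w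

/-- Satisfiability with respect to `F≥1`. -/
def SatGe1 (φ : Fml ℕ) : Prop := ∃ M : Kripke ℕ, AtLeastOne M.R ∧ ∃ w, Sat M φ w

/-- Satisfiability with respect to `F≤2`. -/
def SatLe2 (φ : Fml ℕ) : Prop := ∃ M : Kripke ℕ, AtMostTwo M.R ∧ ∃ w, Sat M φ w

/-- A one-world model with no successors, realizing the boolean assignment `v`;
truth at its world is propositional truth for formulas without modal operators. -/
def propModel (v : ℕ → Bool) : Kripke ℕ :=
  { World := Unit, nonempty := ⟨()⟩, R := fun _ _ => False, V := fun p _ => v p = true }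

/-- Propositional satisfaction of `φ` under the assignment `v`. -/
def PropSat (v : ℕ → Bool) (φ : Fml ℕ) : Prop := Sat (propModel v) φ ()


lemma sat_bigConj {β : Type} (M : Kripke β) (L : List (Fml β)) (w : M.World) :
    Sat M (bigConj L) w ↔ ∀ φ ∈ L, Sat M φ w := by
  induction L with
  | nil => simp [bigConj, Sat]
  | cons φ rest ih =>
    cases rest with
    | nil => simp [bigConj]
    | cons ψ rest' =>
      show Sat M (.and φ (bigConj (ψ :: rest'))) w ↔ _
      simp only [Sat, ih, List.mem_cons]
      constructor
      · rintro ⟨h1, h2⟩ χ (rfl | hχ)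
        · exact h1
        · exact h2 _ hχ
      · intro h
        exact ⟨h _ (Or.inl rfl), fun χ hχ => h _ (Or.inr hχ)⟩

lemma sat_boxI {β : Type} (M : Kripke β) (k : ℕ) (φ : Fml β) (w : M.World) :
    Sat M (boxI k φ) w ↔ ∀ v, chainR M.R k w v → Sat M φ v := by
  induction k generalizing w with
  | zero =>
    simp only [boxI, chainR]
    exact ⟨fun h v hv => hv ▸ h, fun h => h w rfl⟩
  | succ k ih =>
    simp only [boxI, chainR, Sat]
    constructor
    · rintro h v ⟨u, hu, hc⟩
      exact (ih u).1 (h u hu) v hc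
    · intro h u hu
      exact (ih u).2 fun v hc => h v ⟨u, hu, hc⟩

lemma chainR_snoc {W : Type} (R : W → W → Prop) (m : ℕ) (w u v : W)
    (h : chainR R m w u) (hr : R u v) : chainR R (m + 1) w v := by
  induction m generalizing w with
  | zero => exact h ▸ ⟨v, hr, rfl⟩
  | succ m ih =>
    obtain ⟨x, hx, hc⟩ := h
    exact ⟨x, hx, ih x hc⟩

/-- If `M, w ⊨ φ_exp` then for every truth assignment `α` to `p₁, …, p_n`
there is a world `w'` reachable from `w` by an `R`-path of length exactly `n` that
realizes `α` on `p₁, …, p_n`. -/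
theorem stmt5 (n : ℕ) (hn : 1 ≤ n) (M : Kripke ℕ) (w : M.World)
    (h : Sat M (phiExp n) w) (α : ℕ → Bool) :
    ∃ w', chainR M.R n w w' ∧ ∀ i, 1 ≤ i → i ≤ n → (M.V i w' ↔ α i = true) := by
  have hconj : ∀ j < n, Sat M (boxI j (.and (.dia (boxI (n - 1 - j) (.var (j + 1))))
      (.dia (boxI (n - 1 - j) (.nvar (j + 1)))))) w := by
    intro j hj
    have := (sat_bigConj M _ w).1 h
    exact this _ (List.mem_map.2 ⟨j, List.mem_range.2 hj, rfl⟩)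
  have key : ∀ m, m ≤ n → ∃ u, chainR M.R m w u ∧
      ∀ i, 1 ≤ i → i ≤ m → Sat M (boxI (n - m) (litF (i, α i))) u := by
    intro m
    induction m with
    | zero => exact fun _ => ⟨w, rfl, fun i h1 h2 => absurd h2 (by omega)⟩
    | succ m ih =>
      intro hm
      obtain ⟨u, hu, hinv⟩ := ih (by omega)
      have hc := (sat_boxI M m _ w).1 (hconj m (by omega)) u hu
      obtain ⟨h1, h2⟩ := hc
      have : ∃ v, M.R u v ∧ Sat M (boxI (n - 1 - m) (litF (m + 1, α (m + 1)))) v := by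
        cases hα : α (m + 1) with
        | true => obtain ⟨v, hv, hs⟩ := h1; exact ⟨v, hv, by simpa [litF] using hs⟩
        | false => obtain ⟨v, hv, hs⟩ := h2; exact ⟨v, hv, by simpa [litF] using hs⟩
      obtain ⟨v, hv, hs⟩ := this
      refine ⟨v, chainR_snoc M.R m w u v hu hv, fun i hi1 hi2 => ?_⟩
      rcases Nat.lt_or_ge i (m + 1) with hlt | hge
      · have := hinv i hi1 (by omega)
        have heq : n - m = (n - (m + 1)) + 1 := by omega
        rw [heq] at this
        exact this v hv
      · have hi : i = m + 1 := by omega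
        subst hi
        have heq : n - 1 - m = n - (m + 1) := by omega
        rwa [heq] at hs
  obtain ⟨u, hu, hinv⟩ := key n le_rfl
  refine ⟨u, hu, fun i hi1 hi2 => ?_⟩
  have := hinv i hi1 hi2
  simp only [Nat.sub_self, boxI] at this
  cases hα : α i with
  | true => rw [hα] at this; simp only [litF, if_pos rfl] at this; simpa [Sat] using this
  | false => rw [hα] at this; simp only [litF] at this; simpa [Sat] using this

end PoorMansModal
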